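/- Let A, B, C, D ∈ M₃(ℝ). Consider the 3-multiweb m on white vertices W = {w₁, w₂} and black vertices B = {b₁, b₂} given by m(w₁,b₁) = 1, m(w₁,b₂) = 2, m(w₂,b₂) = 1, m(w₂,b₁) = 2, with M₃(ℝ)-connection φ(w₁,b₁) = A, φ(w₁,b₂) = B, φ(w₂,b₂) = C, φ(w₂,b₁) = D, and ordering data L given by: at w₁ the edge to b₁ precedes the edge to b₂; at w₂ the edge to b₂ precedes the edge to b₁; at b₁ the edge to w₁ precedes the edge to w₂; at b₂ the edge to w₂ precedes the edge to w₁. Then Tr_L(m, φ) = tr(A·adj(D)·C·adj(B)), where adj denotes the adjugate matrix and tr the matrix trace. In particular, if det B = det D = 1 then Tr_L(m, φ) = tr(D⁻¹CB⁻¹A). -/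

import Mathlib

/-- The sign `(−1)^{inversions}` of a list of naturals: the signature of the permutation
it represents when it lists a set of distinct values. -/
def listSign (l : List ℕ) : ℤ :=
  (-1) ^ ((Finset.range l.length ×ˢ Finset.range l.length).filter
      (fun p => p.1 < p.2 ∧ l.getD p.2 0 < l.getD p.1 0)).card

/-- The determinant of the square submatrix of `M` with rows `S` and columns `T`, each
taken in increasing order; junk value `0` if `|S| ≠ |T|`. -/
def subdet {n : ℕ} (M : Matrix (Fin n) (Fin n) ℝ) (S T : Finset (Fin n)) : ℝ :=
  if h : T.card = S.card then
    Matrix.det (Matrix.of fun i j : Fin S.card =>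
      M (S.orderEmbOfFin rfl i) (T.orderEmbOfFin h j))
  else 0

/-- An `n`-multiweb on white vertices `W` and black vertices `B`: all row and column
sums of the multiplicity function equal `n`. -/
def IsMultiweb {W B : Type*} [Fintype W] [Fintype B] (n : ℕ) (m : W × B → ℕ) : Prop :=
  (∀ w : W, ∑ b : B, m (w, b) = n) ∧ (∀ b : B, ∑ w : W, m (w, b) = n)

/-- Ordering data: at each vertex, a list enumerating the opposite vertices once each
(inducing in particular a linear order on the incident edges). -/
def IsOrderData {W B : Type*} [Fintype W] [Fintype B]
    (LW : W → List B) (LB : B → List W) : Prop :=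
  (∀ w, (LW w).Nodup ∧ ∀ b, b ∈ LW w) ∧ (∀ b, (LB b).Nodup ∧ ∀ w, w ∈ LB b)

/-- The colorings of a multiweb `m`: pairs `(S,T)` of functions assigning to each edge
`(w,b)` subsets of `{1,…,n}` of size `m(w,b)`, such that at each white vertex the `S`-sets
partition the colors and at each black vertex the `T`-sets partition the colors. -/
def colorings {W B : Type*} [Fintype W] [Fintype B] [DecidableEq W] [DecidableEq B]
    (n : ℕ) (m : W × B → ℕ) :
    Finset ((W × B → Finset (Fin n)) × (W × B → Finset (Fin n))) :=
  Finset.univ.filter fun ST =>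
    (∀ p, (ST.1 p).card = m p) ∧ (∀ p, (ST.2 p).card = m p) ∧
    (∀ w : W, ∀ b b' : B, b ≠ b' → Disjoint (ST.1 (w, b)) (ST.1 (w, b'))) ∧
    (∀ w : W, Finset.univ.biUnion (fun b : B => ST.1 (w, b)) = Finset.univ) ∧
    (∀ b : B, ∀ w w' : W, w ≠ w' → Disjoint (ST.2 (w, b)) (ST.2 (w', b))) ∧
    (∀ b : B, Finset.univ.biUnion (fun w : W => ST.2 (w, b)) = Finset.univ)

/-- The sign `c_w` at a white vertex `w`: the signature of the permutation of `{1,…,n}`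
obtained by concatenating the sets `S(w,b)`, each listed in increasing order, in the
order of the edges at `w` given by the ordering data. -/
def whiteSign {W B : Type*} {n : ℕ} (LW : W → List B)
    (S : W × B → Finset (Fin n)) (w : W) : ℤ :=
  listSign ((LW w).flatMap fun b => (Finset.sort (S (w, b)) (· ≤ ·)).map Fin.val)

/-- The sign `c_b` at a black vertex `b`, defined analogously using the sets `T(·,b)`. -/
def blackSign {W B : Type*} {n : ℕ} (LB : B → List W)
    (T : W × B → Finset (Fin n)) (b : B) : ℤ :=
  listSign ((LB b).flatMap fun w => (Finset.sort (T (w, b)) (· ≤ ·)).map Fin.val)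

/-- The web-trace `Tr_L(m, φ)` of a multiweb `m` with ordering data `L = (LW, LB)` and
`M_n(ℝ)`-connection `φ` (combinatorial formula of Proposition 3.2):
`Σ_{colorings (S,T)} (∏_v c_v) · ∏_{(w,b)} det(φ(w,b)_{S(w,b),T(w,b)})`. -/
def webTrace {W B : Type*} [Fintype W] [Fintype B] [DecidableEq W] [DecidableEq B]
    (n : ℕ) (m : W × B → ℕ) (LW : W → List B) (LB : B → List W)
    (φ : W × B → Matrix (Fin n) (Fin n) ℝ) : ℝ :=
  ∑ ST ∈ colorings n m,
    (((∏ w, whiteSign LW ST.1 w) * ∏ b, blackSign LB ST.2 b : ℤ) : ℝ) *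
      ∏ p : W × B, subdet (φ p) (ST.1 p) (ST.2 p)

namespace WebAux

def cmp : Fin 3 → Finset (Fin 3) := ![{1,2}, {0,2}, {0,1}]

lemma cmp_eq (i : Fin 3) : cmp i = {i}ᶜ := by fin_cases i <;> decide

lemma card_cmp : ∀ i : Fin 3, (cmp i).card = 2 := by decide

lemma not_mem_cmp : ∀ i : Fin 3, i ∉ cmp i := by decide

lemma mem_or_mem_cmp : ∀ i x : Fin 3, x ∈ ({i} : Finset (Fin 3)) ∨ x ∈ cmp i := by decide

lemma sort_pair {a b : Fin 3} (hab : a < b) :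
    Finset.sort ({a,b} : Finset (Fin 3)) (· ≤ ·) = [a,b] := by
  rw [Finset.sort_insert, Finset.sort_singleton]
  · simp [le_of_lt hab]
  · simp [hab.ne]

lemma subdet_singleton (M : Matrix (Fin 3) (Fin 3) ℝ) (i k : Fin 3) :
    subdet M {i} {k} = M i k := by
  rw [subdet, dif_pos (by simp)]
  erw [Matrix.det_fin_one]
  simp [Finset.orderEmbOfFin_apply]
  rfl

lemma mem_two {f : Fin 2 → Finset (Fin 3)} (h : Finset.univ.biUnion f = Finset.univ)
    (y : Fin 3) : y ∈ f 0 ∨ y ∈ f 1 := by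
  have hy : y ∈ Finset.univ.biUnion f := by rw [h]; exact Finset.mem_univ y
  rcases Finset.mem_biUnion.mp hy with ⟨b, -, hb⟩
  fin_cases b
  exacts [Or.inl hb, Or.inr hb]

lemma compl_of {s t : Finset (Fin 3)} {x : Fin 3} (hs : s = {x}) (ht : t.card = 2)
    (hu : ∀ y : Fin 3, y ∈ s ∨ y ∈ t) : t = cmp x := by
  rw [cmp_eq]
  refine (Finset.eq_of_subset_of_card_le ?_ ?_).symm
  · intro y hy
    have hyx : y ≠ x := by simpa using hy
    rcases hu y with h | h
    · rw [hs, Finset.mem_singleton] at h; exact absurd h hyx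
    · exact h
  · rw [ht, Finset.card_compl, Finset.card_singleton]; norm_num

def fcol (q : Fin 3 × Fin 3 × Fin 3 × Fin 3) :
    (Fin 2 × Fin 2 → Finset (Fin 3)) × (Fin 2 × Fin 2 → Finset (Fin 3)) :=
  (fun p => if p = (0,0) then {q.1} else if p = (0,1) then cmp q.1
      else if p = (1,1) then {q.2.1} else cmp q.2.1,
   fun p => if p = (0,0) then {q.2.2.1} else if p = (1,0) then cmp q.2.2.1
      else if p = (1,1) then {q.2.2.2} else cmp q.2.2.2)

lemma colorings_eq :
    colorings 3 (fun p : Fin 2 × Fin 2 =>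
        if p = (0, 0) then 1 else if p = (0, 1) then 2 else if p = (1, 1) then 1 else 2) =
      Finset.image fcol Finset.univ := by
  ext ST
  simp only [colorings, Finset.mem_filter, Finset.mem_univ, true_and, Finset.mem_image]
  constructor
  · rintro ⟨hS, hT, hSd, hSu, hTd, hTu⟩
    obtain ⟨i, hi⟩ := Finset.card_eq_one.mp (hS (0,0) : (ST.1 (0,0)).card = 1)
    obtain ⟨j, hj⟩ := Finset.card_eq_one.mp (hS (1,1) : (ST.1 (1,1)).card = 1)
    obtain ⟨k, hk⟩ := Finset.card_eq_one.mp (hT (0,0) : (ST.2 (0,0)).card = 1)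
    obtain ⟨l, hl⟩ := Finset.card_eq_one.mp (hT (1,1) : (ST.2 (1,1)).card = 1)
    have hi' : ST.1 (0,1) = cmp i :=
      compl_of hi (hS (0,1) : _) (fun y => mem_two (hSu 0) y)
    have hj' : ST.1 (1,0) = cmp j :=
      compl_of hj (hS (1,0) : _) (fun y => (mem_two (hSu 1) y).symm)
    have hk' : ST.2 (1,0) = cmp k :=
      compl_of hk (hT (1,0) : _) (fun y => mem_two (hTu 0) y)
    have hl' : ST.2 (0,1) = cmp l :=
      compl_of hl (hT (0,1) : _) (fun y => (mem_two (hTu 1) y).symm)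
    refine ⟨(i, j, k, l), ?_⟩
    refine Prod.ext ?_ ?_ <;> funext p <;> obtain ⟨a, b⟩ := p <;> fin_cases a <;>
        fin_cases b <;>
      simp (config := { decide := true }) [fcol, ← Prod.mk_zero_zero, ← Prod.mk_one_one,
        hi, hj, hk, hl, hi', hj', hk', hl']
  · rintro ⟨⟨i, j, k, l⟩, rfl⟩
    refine ⟨?_, ?_, ?_, ?_, ?_, ?_⟩
    · intro p; obtain ⟨a, b⟩ := p; fin_cases a <;> fin_cases b <;>
        simp (config := { decide := true }) [fcol, card_cmp]
    · intro p; obtain ⟨a, b⟩ := p; fin_cases a <;> fin_cases b <;>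
        simp (config := { decide := true }) [fcol, card_cmp]
    · intro w b b' hbb; fin_cases w <;> fin_cases b <;> fin_cases b' <;>
        simp_all (config := { decide := true }) [fcol, Finset.disjoint_singleton_left,
          Finset.disjoint_singleton_right, not_mem_cmp]
    · intro w; rw [Finset.eq_univ_iff_forall]; intro x
      rw [Finset.mem_biUnion]
      fin_cases w
      · rcases mem_or_mem_cmp i x with h | h
        exacts [⟨0, Finset.mem_univ _, by simpa (config := { decide := true }) [fcol] using h⟩,
          ⟨1, Finset.mem_univ _, by simpa (config := { decide := true }) [fcol] using h⟩]
      · rcases mem_or_mem_cmp j x with h | h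
        exacts [⟨1, Finset.mem_univ _, by simpa (config := { decide := true }) [fcol] using h⟩,
          ⟨0, Finset.mem_univ _, by simpa (config := { decide := true }) [fcol] using h⟩]
    · intro b w w' hww; fin_cases b <;> fin_cases w <;> fin_cases w' <;>
        simp_all (config := { decide := true }) [fcol, Finset.disjoint_singleton_left,
          Finset.disjoint_singleton_right, not_mem_cmp]
    · intro b; rw [Finset.eq_univ_iff_forall]; intro x
      rw [Finset.mem_biUnion]
      fin_cases b
      · rcases mem_or_mem_cmp k x with h | h
        exacts [⟨0, Finset.mem_univ _, by simpa (config := { decide := true }) [fcol] using h⟩,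
          ⟨1, Finset.mem_univ _, by simpa (config := { decide := true }) [fcol] using h⟩]
      · rcases mem_or_mem_cmp l x with h | h
        exacts [⟨1, Finset.mem_univ _, by simpa (config := { decide := true }) [fcol] using h⟩,
          ⟨0, Finset.mem_univ _, by simpa (config := { decide := true }) [fcol] using h⟩]

lemma fcol_injOn : ∀ q ∈ (Finset.univ : Finset (Fin 3 × Fin 3 × Fin 3 × Fin 3)),
    ∀ q' ∈ (Finset.univ : Finset (Fin 3 × Fin 3 × Fin 3 × Fin 3)),
    fcol q = fcol q' → q = q' := by
  rintro ⟨i, j, k, l⟩ - ⟨i', j', k', l'⟩ - h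
  have h1 := congrFun (congrArg Prod.fst h) ((0 : Fin 2), (0 : Fin 2))
  have h2 := congrFun (congrArg Prod.fst h) ((1 : Fin 2), (1 : Fin 2))
  have h3 := congrFun (congrArg Prod.snd h) ((0 : Fin 2), (0 : Fin 2))
  have h4 := congrFun (congrArg Prod.snd h) ((1 : Fin 2), (1 : Fin 2))
  simp (config := { decide := true }) [fcol] at h1 h2 h3 h4
  simp [Prod.ext_iff, h1, h2, h3, h4]

lemma sort_cmp : ∀ i : Fin 3, Finset.sort (cmp i) (· ≤ ·) =
    [![1,0,0] i, ![2,2,1] i] := by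
  intro i
  fin_cases i <;> simp [cmp] <;> exact sort_pair (by decide)

lemma subdet_cmp (M : Matrix (Fin 3) (Fin 3) ℝ) (a c : Fin 3) :
    subdet M (cmp a) (cmp c) =
      M (![1,0,0] a) (![1,0,0] c) * M (![2,2,1] a) (![2,2,1] c)
      - M (![1,0,0] a) (![2,2,1] c) * M (![2,2,1] a) (![1,0,0] c) := by
  fin_cases a <;> fin_cases c <;>
    · simp only [cmp]
      norm_num
      rw [subdet, dif_pos (by decide)]
      erw [Matrix.det_fin_two]
      simp only [Matrix.of_apply, Finset.orderEmbOfFin_apply,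
        sort_pair (by decide : (1:Fin 3) < 2), sort_pair (by decide : (0:Fin 3) < 2),
        sort_pair (by decide : (0:Fin 3) < 1)]
      norm_num
      rfl

lemma sign_single_cmp (i : Fin 3) :
    listSign (List.map Fin.val (Finset.sort ({i} : Finset (Fin 3)) (· ≤ ·))
      ++ List.map Fin.val (Finset.sort (cmp i) (· ≤ ·))) = (-1) ^ (i : ℕ) := by
  fin_cases i <;> rw [Finset.sort_singleton, sort_cmp] <;> decide

lemma adj3 (M : Matrix (Fin 3) (Fin 3) ℝ) (k j : Fin 3) :
    M.adjugate k j = (-1 : ℝ) ^ ((k : ℕ) + (j : ℕ)) *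
      (M (![1,0,0] j) (![1,0,0] k) * M (![2,2,1] j) (![2,2,1] k)
        - M (![1,0,0] j) (![2,2,1] k) * M (![2,2,1] j) (![1,0,0] k)) := by
  fin_cases k <;> fin_cases j <;>
    · simp [Matrix.adjugate_fin_three]
      try norm_num
      try ring

lemma key (A B C D : Matrix (Fin 3) (Fin 3) ℝ) (i j k l : Fin 3) :
    (((∏ w, whiteSign (![[0,1],[1,0]]) (fcol (i,j,k,l)).1 w) *
      ∏ b, blackSign (![[0,1],[1,0]]) (fcol (i,j,k,l)).2 b : ℤ) : ℝ) *
      ∏ p : Fin 2 × Fin 2, subdet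
        (if p = (0, 0) then A else if p = (0, 1) then B
          else if p = (1, 1) then C else D)
        ((fcol (i,j,k,l)).1 p) ((fcol (i,j,k,l)).2 p)
    = A i k * D.adjugate k j * C j l * B.adjugate l i := by
  rw [Fintype.prod_prod_type]
  simp (config := { decide := true }) only [Fin.prod_univ_two, whiteSign, blackSign, fcol,
    Matrix.cons_val_zero, Matrix.cons_val_one, Matrix.head_cons,
    List.flatMap_cons, List.flatMap_nil, List.append_nil,
    if_true, if_false]
  rw [sign_single_cmp i, sign_single_cmp j, sign_single_cmp k, sign_single_cmp l,
    subdet_singleton, subdet_singleton, subdet_cmp, subdet_cmp,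
    adj3 D k j, adj3 B l i]
  push_cast
  ring

set_option maxHeartbeats 1000000 in
lemma sum_eq_trace (A B C D : Matrix (Fin 3) (Fin 3) ℝ) :
    ∑ q : Fin 3 × Fin 3 × Fin 3 × Fin 3,
      A q.1 q.2.2.1 * D.adjugate q.2.2.1 q.2.1 * C q.2.1 q.2.2.2 * B.adjugate q.2.2.2 q.1
    = Matrix.trace (A * D.adjugate * C * B.adjugate) := by
  rw [Matrix.trace_fin_three]
  simp only [Fintype.sum_prod_type, Fin.sum_univ_three, Matrix.mul_apply]
  ring

end WebAux

/-- The 4-cycle loop computation (Section 3.7.2): the 3-multiweb on white vertices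
`w₁, w₂` and black vertices `b₁, b₂` with `m(w₁,b₁) = 1`, `m(w₁,b₂) = 2`, `m(w₂,b₂) = 1`,
`m(w₂,b₁) = 2` (here `w₁ = b₁ = 0`, `w₂ = b₂ = 1` in `Fin 2`), connection
`φ(w₁,b₁) = A`, `φ(w₁,b₂) = B`, `φ(w₂,b₂) = C`, `φ(w₂,b₁) = D`, and the indicated
ordering data, has web-trace `tr(A·adj(D)·C·adj(B))`; in particular if
`det B = det D = 1` the web-trace is `tr(D⁻¹CB⁻¹A)`. -/



theorem webTrace_four_cycle (A B C D : Matrix (Fin 3) (Fin 3) ℝ) :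
    webTrace 3
      (fun p : Fin 2 × Fin 2 =>
        if p = (0, 0) then 1 else if p = (0, 1) then 2 else if p = (1, 1) then 1 else 2)
      (![[0, 1], [1, 0]]) (![[0, 1], [1, 0]])
      (fun p : Fin 2 × Fin 2 =>
        if p = (0, 0) then A else if p = (0, 1) then B else if p = (1, 1) then C else D) =
      Matrix.trace (A * D.adjugate * C * B.adjugate) ∧
    (B.det = 1 → D.det = 1 →
      webTrace 3
        (fun p : Fin 2 × Fin 2 =>
          if p = (0, 0) then 1 else if p = (0, 1) then 2 else if p = (1, 1) then 1 else 2)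
        (![[0, 1], [1, 0]]) (![[0, 1], [1, 0]])
        (fun p : Fin 2 × Fin 2 =>
          if p = (0, 0) then A else if p = (0, 1) then B else if p = (1, 1) then C else D) =
        Matrix.trace (D⁻¹ * C * B⁻¹ * A)) := by
  have main : webTrace 3
      (fun p : Fin 2 × Fin 2 =>
        if p = (0, 0) then 1 else if p = (0, 1) then 2 else if p = (1, 1) then 1 else 2)
      (![[0, 1], [1, 0]]) (![[0, 1], [1, 0]])
      (fun p : Fin 2 × Fin 2 =>
        if p = (0, 0) then A else if p = (0, 1) then B else if p = (1, 1) then C else D) =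
      Matrix.trace (A * D.adjugate * C * B.adjugate) := by
    rw [webTrace, WebAux.colorings_eq, Finset.sum_image WebAux.fcol_injOn]
    refine (Finset.sum_congr rfl fun q _ => ?_).trans (WebAux.sum_eq_trace A B C D)
    obtain ⟨i, j, k, l⟩ := q
    exact WebAux.key A B C D i j k l
  refine ⟨main, fun hB hD => ?_⟩
  rw [main]
  have hBinv : B⁻¹ = B.adjugate := by rw [Matrix.inv_def, hB]; simp
  have hDinv : D⁻¹ = D.adjugate := by rw [Matrix.inv_def, hD]; simp
  rw [hBinv, hDinv, show A * D.adjugate * C * B.adjugate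
      = A * (D.adjugate * C * B.adjugate) by noncomm_ring,
    Matrix.trace_mul_comm, Matrix.mul_assoc, Matrix.mul_assoc]
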